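/- Let n ≥ 4 be an integer. Then the 2-total bondage number of the complete graph K_n equals 2n − 4: b_t^2(K_n) = 2n − 4. -/

import Mathlib

open SimpleGraph

/-- A set `S` of vertices is a total dominating set of `G` if every vertex of `G`
is adjacent to at least one vertex of `S`. -/
def IsTotalDominatingSet {V : Type*} (G : SimpleGraph V) (S : Set V) : Prop :=
  ∀ v : V, ∃ u ∈ S, G.Adj v u

/-- The total domination number of `G`: the minimum cardinality of a total
dominating set of `G`. -/
noncomputable def totalDominationNumber {V : Type*} (G : SimpleGraph V) : ℕ :=
  sInf {n : ℕ | ∃ S : Set V, S.ncard = n ∧ IsTotalDominatingSet G S}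

/-- A graph has no isolated vertices if every vertex has a neighbor. -/
def NoIsolatedVerts {V : Type*} (G : SimpleGraph V) : Prop :=
  ∀ v : V, ∃ u : V, G.Adj v u

/-- The `k`-total bondage number of `G`: the minimum cardinality of a set `F` of
edges of `G` such that `G − F` has no isolated vertices and the total domination
number of `G − F` is at least `γ_t(G) + k`. -/
noncomputable def kTotalBondage {V : Type*} (G : SimpleGraph V) (k : ℕ) : ℕ :=
  sInf {m : ℕ | ∃ F : Set (Sym2 V), F ⊆ G.edgeSet ∧ F.ncard = m ∧
    NoIsolatedVerts (G.deleteEdges F) ∧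
    totalDominationNumber G + k ≤ totalDominationNumber (G.deleteEdges F)}

namespace KTB
open Finset

attribute [local instance] Classical.propDecidable

variable {n : ℕ} {F : Set (Sym2 (Fin n))}

private lemma adj_iff (F : Set (Sym2 (Fin n))) (a b : Fin n) :
    ((⊤ : SimpleGraph (Fin n)).deleteEdges F).Adj a b ↔
      a ≠ b ∧ ¬ (SimpleGraph.fromEdgeSet F).Adj a b := by
  simp only [SimpleGraph.deleteEdges_adj, SimpleGraph.top_adj, SimpleGraph.fromEdgeSet_adj]
  tauto

private lemma ncard_le_two (a b : Fin n) : ({a, b} : Set (Fin n)).ncard ≤ 2 := by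
  have h1 := Set.ncard_insert_le a ({b} : Set (Fin n))
  simpa [Set.ncard_singleton] using h1

private lemma ncard_le_three (a b c : Fin n) : ({a, b, c} : Set (Fin n)).ncard ≤ 3 := by
  have h1 := Set.ncard_insert_le a ({b, c} : Set (Fin n))
  have h2 := ncard_le_two b c
  omega

/-- L1: every vertex is incident to at least two deleted edges. -/
private lemma dF_ge_two
    (hiso : NoIsolatedVerts ((⊤ : SimpleGraph (Fin n)).deleteEdges F))
    (h4 : ∀ S : Set (Fin n),
      IsTotalDominatingSet ((⊤ : SimpleGraph (Fin n)).deleteEdges F) S → 4 ≤ S.ncard)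
    (u : Fin n) : 2 ≤ (SimpleGraph.fromEdgeSet F).degree u := by
  set Gf := SimpleGraph.fromEdgeSet F with hGf
  set H := (⊤ : SimpleGraph (Fin n)).deleteEdges F with hH
  by_contra hlt
  have huniq : ∀ a b : Fin n, Gf.Adj u a → Gf.Adj u b → a = b := by
    intro a b ha hb
    have hcard : (Gf.neighborFinset u).card ≤ 1 := by
      unfold SimpleGraph.degree at hlt
      have : ¬ 2 ≤ (Gf.neighborFinset u).card := by convert hlt
      omega
    exact Finset.card_le_one.mp hcard a (by simpa using ha) b (by simpa using hb)
  by_cases hx : ∃ x, Gf.Adj u x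
  · obtain ⟨x, hx⟩ := hx
    obtain ⟨y, hxy⟩ := hiso x
    have hyu : y ≠ u := by
      intro h
      apply ((adj_iff F x y).mp hxy).2
      rw [h]; exact hx.symm
    have hyx : y ≠ x := fun h => ((adj_iff F x y).mp hxy).1 h.symm
    have hTDS : IsTotalDominatingSet H ({u, y} : Set (Fin n)) := by
      intro v
      by_cases hvu : v = u
      · refine ⟨y, by simp, ?_⟩
        subst hvu
        rw [adj_iff]
        refine ⟨hyu.symm, fun h => hyx (huniq y x h hx)⟩
      · by_cases hvx : v = x
        · exact ⟨y, by simp, hvx ▸ hxy⟩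
        · refine ⟨u, by simp, ?_⟩
          rw [adj_iff]
          exact ⟨hvu, fun h => hvx (huniq v x h.symm hx)⟩
    have := h4 _ hTDS
    have := ncard_le_two u y
    omega
  · push_neg at hx
    obtain ⟨w, hw⟩ := hiso u
    have hTDS : IsTotalDominatingSet H ({u, w} : Set (Fin n)) := by
      intro v
      by_cases hvu : v = u
      · exact ⟨w, by simp, hvu ▸ hw⟩
      · refine ⟨u, by simp, ?_⟩
        rw [adj_iff]
        exact ⟨hvu, fun h => hx v h.symm⟩
    have := h4 _ hTDS
    have := ncard_le_two u w
    omega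

/-- L2 core: a vertex `u` whose deleted edges go exactly to `x, y`, where `x` has an
`H`-neighbor other than `y` and `y` has an `H`-neighbor other than `x`, is impossible. -/
private lemma key2
    (h4 : ∀ S : Set (Fin n),
      IsTotalDominatingSet ((⊤ : SimpleGraph (Fin n)).deleteEdges F) S → 4 ≤ S.ncard)
    (u x y : Fin n)
    (hux : (SimpleGraph.fromEdgeSet F).Adj u x) (huy : (SimpleGraph.fromEdgeSet F).Adj u y)
    (hw : ∀ w, (SimpleGraph.fromEdgeSet F).Adj u w → w = x ∨ w = y)
    (b c : Fin n)
    (hxb : ((⊤ : SimpleGraph (Fin n)).deleteEdges F).Adj x b) (hby : b ≠ y)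
    (hyc : ((⊤ : SimpleGraph (Fin n)).deleteEdges F).Adj y c) (hcx : c ≠ x) : False := by
  set Gf := SimpleGraph.fromEdgeSet F with hGf
  set H := (⊤ : SimpleGraph (Fin n)).deleteEdges F with hH
  have hbx : b ≠ x := fun h => ((adj_iff F x b).mp hxb).1 h.symm
  have hcy : c ≠ y := fun h => ((adj_iff F y c).mp hyc).1 h.symm
  have hbu : b ≠ u := by
    intro h
    apply ((adj_iff F x b).mp hxb).2
    rw [h]; exact hux.symm
  have hcu : c ≠ u := by
    intro h
    apply ((adj_iff F y c).mp hyc).2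
    rw [h]; exact huy.symm
  have hnub : ¬ Gf.Adj u b := by
    intro h
    rcases hw b h with h' | h'
    · exact hbx h'
    · exact hby h'
  have hnuc : ¬ Gf.Adj u c := by
    intro h
    rcases hw c h with h' | h'
    · exact hcx h'
    · exact hcy h'
  have hTDS : IsTotalDominatingSet H ({u, b, c} : Set (Fin n)) := by
    intro v
    by_cases hvx : v = x
    · exact ⟨b, by simp, hvx ▸ hxb⟩
    by_cases hvy : v = y
    · exact ⟨c, by simp, hvy ▸ hyc⟩
    by_cases hvu : v = u
    · refine ⟨b, by simp, ?_⟩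
      rw [hvu, adj_iff]
      exact ⟨Ne.symm hbu, hnub⟩
    · refine ⟨u, by simp, ?_⟩
      rw [adj_iff]
      refine ⟨hvu, fun h => ?_⟩
      rcases hw v h.symm with h' | h'
      · exact hvx h'
      · exact hvy h'
  have := h4 _ hTDS
  have := ncard_le_three u b c
  omega

/-- L3 core. -/
private lemma key3aux
    (hiso : NoIsolatedVerts ((⊤ : SimpleGraph (Fin n)).deleteEdges F))
    (h4 : ∀ S : Set (Fin n),
      IsTotalDominatingSet ((⊤ : SimpleGraph (Fin n)).deleteEdges F) S → 4 ≤ S.ncard)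
    (u p q r b : Fin n)
    (hp : (SimpleGraph.fromEdgeSet F).Adj u p) (hq : (SimpleGraph.fromEdgeSet F).Adj u q)
    (hr : (SimpleGraph.fromEdgeSet F).Adj u r)
    (hw : ∀ w, (SimpleGraph.fromEdgeSet F).Adj u w → w = p ∨ w = q ∨ w = r)
    (hbr : b ≠ r)
    (hbp : ((⊤ : SimpleGraph (Fin n)).deleteEdges F).Adj b p)
    (hbq : ((⊤ : SimpleGraph (Fin n)).deleteEdges F).Adj b q) : False := by
  set Gf := SimpleGraph.fromEdgeSet F with hGf
  set H := (⊤ : SimpleGraph (Fin n)).deleteEdges F with hH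
  have hbp' : b ≠ p := ((adj_iff F b p).mp hbp).1
  have hbq' : b ≠ q := ((adj_iff F b q).mp hbq).1
  have hbu : b ≠ u := by
    intro h
    apply ((adj_iff F b p).mp hbp).2
    rw [h]; exact hp
  have hnub : ¬ Gf.Adj u b := by
    intro h
    rcases hw b h with h' | h' | h'
    · exact hbp' h'
    · exact hbq' h'
    · exact hbr h'
  obtain ⟨c, hrc⟩ := hiso r
  have hTDS : IsTotalDominatingSet H ({u, b, c} : Set (Fin n)) := by
    intro v
    by_cases hvp : v = p
    · exact ⟨b, by simp, hvp ▸ hbp.symm⟩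
    by_cases hvq : v = q
    · exact ⟨b, by simp, hvq ▸ hbq.symm⟩
    by_cases hvr : v = r
    · exact ⟨c, by simp, hvr ▸ hrc⟩
    by_cases hvu : v = u
    · refine ⟨b, by simp, ?_⟩
      rw [hvu, adj_iff]
      exact ⟨Ne.symm hbu, hnub⟩
    · refine ⟨u, by simp, ?_⟩
      rw [adj_iff]
      refine ⟨hvu, fun h => ?_⟩
      rcases hw v h.symm with h' | h' | h'
      · exact hvp h'
      · exact hvq h'
      · exact hvr h'
  have := h4 _ hTDS
  have := ncard_le_three u b c
  omega

/-- L3: if the deleted edges at `u` go exactly to `x, y, z`, then every other vertex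
is incident to deleted edges to at least two of `x, y, z`. -/
private lemma key3
    (hiso : NoIsolatedVerts ((⊤ : SimpleGraph (Fin n)).deleteEdges F))
    (h4 : ∀ S : Set (Fin n),
      IsTotalDominatingSet ((⊤ : SimpleGraph (Fin n)).deleteEdges F) S → 4 ≤ S.ncard)
    (u x y z : Fin n)
    (hx : (SimpleGraph.fromEdgeSet F).Adj u x) (hy : (SimpleGraph.fromEdgeSet F).Adj u y)
    (hz : (SimpleGraph.fromEdgeSet F).Adj u z)
    (hw : ∀ w, (SimpleGraph.fromEdgeSet F).Adj u w → w = x ∨ w = y ∨ w = z)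
    (b : Fin n) (hbx : b ≠ x) (hby : b ≠ y) (hbz : b ≠ z) :
    ((SimpleGraph.fromEdgeSet F).Adj b x ∧ (SimpleGraph.fromEdgeSet F).Adj b y) ∨
    ((SimpleGraph.fromEdgeSet F).Adj b y ∧ (SimpleGraph.fromEdgeSet F).Adj b z) ∨
    ((SimpleGraph.fromEdgeSet F).Adj b x ∧ (SimpleGraph.fromEdgeSet F).Adj b z) := by
  set Gf := SimpleGraph.fromEdgeSet F with hGf
  set H := (⊤ : SimpleGraph (Fin n)).deleteEdges F with hH
  have halt : ∀ t : Fin n, b ≠ t → ¬ Gf.Adj b t → H.Adj b t := by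
    intro t hne hn
    rw [adj_iff]; exact ⟨hne, hn⟩
  by_cases gx : Gf.Adj b x
  · by_cases gy : Gf.Adj b y
    · exact Or.inl ⟨gx, gy⟩
    · by_cases gz : Gf.Adj b z
      · exact Or.inr (Or.inr ⟨gx, gz⟩)
      · exact absurd (key3aux hiso h4 u y z x b hy hz hx
          (fun w hw' => by rcases hw w hw' with h|h|h <;> tauto) hbx
          (halt y hby gy) (halt z hbz gz)) (by simp)
  · by_cases gy : Gf.Adj b y
    · by_cases gz : Gf.Adj b z
      · exact Or.inr (Or.inl ⟨gy, gz⟩)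
      · exact absurd (key3aux hiso h4 u x z y b hx hz hy
          (fun w hw' => by rcases hw w hw' with h|h|h <;> tauto) hby
          (halt x hbx gx) (halt z hbz gz)) (by simp)
    · exact absurd (key3aux hiso h4 u x y z b hx hy hz hw hbz
        (halt x hbx gx) (halt y hby gy)) (by simp)

/-- If `u` has exactly two deleted edges, one endpoint is a pendant vertex. -/
private lemma pend_of_dF_two
    (hiso : NoIsolatedVerts ((⊤ : SimpleGraph (Fin n)).deleteEdges F))
    (h4 : ∀ S : Set (Fin n),
      IsTotalDominatingSet ((⊤ : SimpleGraph (Fin n)).deleteEdges F) S → 4 ≤ S.ncard)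
    (u : Fin n) (h2 : (SimpleGraph.fromEdgeSet F).degree u = 2) :
    ∃ p q : Fin n, (SimpleGraph.fromEdgeSet F).Adj u p ∧ (SimpleGraph.fromEdgeSet F).Adj u q ∧
      (∀ b, ((⊤ : SimpleGraph (Fin n)).deleteEdges F).Adj p b → b = q) := by
  set Gf := SimpleGraph.fromEdgeSet F with hGf
  set H := (⊤ : SimpleGraph (Fin n)).deleteEdges F with hH
  rw [SimpleGraph.degree, Finset.card_eq_two] at h2
  obtain ⟨x, y, hxy, hset⟩ := h2
  have hmem : ∀ w : Fin n, Gf.Adj u w ↔ (w = x ∨ w = y) := by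
    intro w
    rw [← SimpleGraph.mem_neighborFinset, hset]
    simp
  have hux : Gf.Adj u x := (hmem x).mpr (Or.inl rfl)
  have huy : Gf.Adj u y := (hmem y).mpr (Or.inr rfl)
  by_cases hcase : ∀ b, H.Adj x b → b = y
  · exact ⟨x, y, hux, huy, hcase⟩
  · push_neg at hcase
    obtain ⟨b, hxb, hby⟩ := hcase
    refine ⟨y, x, huy, hux, fun c hyc => ?_⟩
    by_contra hcx
    exact key2 h4 u x y hux huy (fun w hw => (hmem w).mp hw) b c hxb hby hyc hcx

/-- Handshake: the degree sum of `fromEdgeSet F` is twice the number of deleted edges. -/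
private lemma handshake (hF : F ⊆ (⊤ : SimpleGraph (Fin n)).edgeSet) :
    ∑ v, (SimpleGraph.fromEdgeSet F).degree v = 2 * F.ncard := by
  rw [SimpleGraph.sum_degrees_eq_twice_card_edges]
  congr 1
  have hE : (SimpleGraph.fromEdgeSet F).edgeSet = F := by
    rw [SimpleGraph.edgeSet_fromEdgeSet]
    ext e
    constructor
    · exact fun he => he.1
    · intro he
      refine ⟨he, ?_⟩
      have := hF he
      simpa [SimpleGraph.edgeSet_top] using this
  have h := Set.ncard_coe_finset ((SimpleGraph.fromEdgeSet F).edgeFinset)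
  rw [SimpleGraph.coe_edgeFinset, hE] at h
  have : (instFintypeElemSym2EdgeSetFromEdgeSetOfDecidableEq F) = (SimpleGraph.fromEdgeSet F).fintypeEdgeSet := Subsingleton.elim _ _
  rw [← this]
  exact h.symm

private lemma sum_bound (hn : 4 ≤ n)
    (hiso : NoIsolatedVerts ((⊤ : SimpleGraph (Fin n)).deleteEdges F))
    (h4 : ∀ S : Set (Fin n),
      IsTotalDominatingSet ((⊤ : SimpleGraph (Fin n)).deleteEdges F) S → 4 ≤ S.ncard) :
    4 * n ≤ (∑ v, (SimpleGraph.fromEdgeSet F).degree v) + 8 := by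
  classical
  set Gf := SimpleGraph.fromEdgeSet F with hGf
  set H := (⊤ : SimpleGraph (Fin n)).deleteEdges F with hH
  set d : Fin n → ℕ := fun v => Gf.degree v with hd
  have hd2 : ∀ v, 2 ≤ d v := dF_ge_two hiso h4
  show 4 * n ≤ (∑ v, d v) + 8
  have hpendbound : ∀ x y : Fin n, (∀ b, H.Adj x b → b = y) → n ≤ d x + 2 := by
    intro x y hxy
    have hsub : (Finset.univ.erase x).erase y ⊆ Gf.neighborFinset x := by
      intro w hw
      rw [Finset.mem_erase, Finset.mem_erase] at hw
      obtain ⟨hwy, hwx, -⟩ := hw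
      rw [SimpleGraph.mem_neighborFinset]
      by_contra hng
      exact hwy (hxy w ((adj_iff F x w).mpr ⟨Ne.symm hwx, fun h => hng h⟩))
    have hc1 := Finset.card_le_card hsub
    have hc2 : (Finset.univ.erase x).card - 1 ≤ ((Finset.univ.erase x).erase y).card :=
      Finset.pred_card_le_card_erase
    have hc3 : (Finset.univ.erase x).card = n - 1 := by
      rw [Finset.card_erase_of_mem (Finset.mem_univ x)]
      simp
    have : (Gf.neighborFinset x).card = d x := rfl
    omega
  by_cases hp2 : ∃ x₁ x₂ : Fin n, x₁ ≠ x₂ ∧ (∃ y, ∀ b, H.Adj x₁ b → b = y) ∧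
      (∃ y, ∀ b, H.Adj x₂ b → b = y)
  · -- two pendant vertices
    obtain ⟨x₁, x₂, hne, ⟨y₁, h1⟩, ⟨y₂, h2⟩⟩ := hp2
    have hb1 := hpendbound x₁ y₁ h1
    have hb2 := hpendbound x₂ y₂ h2
    have e1 : d x₁ + ∑ v ∈ Finset.univ.erase x₁, d v = ∑ v, d v :=
      Finset.add_sum_erase _ d (Finset.mem_univ x₁)
    have hx2mem : x₂ ∈ Finset.univ.erase x₁ := by simp [hne.symm]
    have e2 : d x₂ + ∑ v ∈ (Finset.univ.erase x₁).erase x₂, d v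
        = ∑ v ∈ Finset.univ.erase x₁, d v :=
      Finset.add_sum_erase _ d hx2mem
    have hrest : ((Finset.univ.erase x₁).erase x₂).card * 2
        ≤ ∑ v ∈ (Finset.univ.erase x₁).erase x₂, d v := by
      rw [← smul_eq_mul]
      exact Finset.card_nsmul_le_sum _ _ _ (fun x _ => hd2 x)
    have hcard : ((Finset.univ.erase x₁).erase x₂).card = n - 2 := by
      rw [Finset.card_erase_of_mem hx2mem, Finset.card_erase_of_mem (Finset.mem_univ _)]
      simp only [Finset.card_univ, Fintype.card_fin]
      omega
    omega
  · by_cases hp1 : ∃ x : Fin n, ∃ y, ∀ b, H.Adj x b → b = y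
    · -- exactly one pendant vertex
      obtain ⟨x, y, hxy⟩ := hp1
      have huniq : ∀ v y', (∀ b, H.Adj v b → b = y') → v = x := by
        intro v y' hv
        by_contra hvx
        exact hp2 ⟨v, x, hvx, ⟨y', hv⟩, ⟨y, hxy⟩⟩
      have hHxy : H.Adj x y := by
        obtain ⟨b, hb⟩ := hiso x
        have := hxy b hb
        rwa [this] at hb
      have hyx : y ≠ x := Ne.symm ((adj_iff F x y).mp hHxy).1
      have hnGxy : ¬ Gf.Adj x y := ((adj_iff F x y).mp hHxy).2
      have claim2 : ∀ u : Fin n, u ≠ x → ¬ Gf.Adj y u → 3 ≤ d u := by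
        intro u hux hyu
        by_contra h3
        have hu2 : d u = 2 := by have := hd2 u; omega
        obtain ⟨p, q, hup, huq, hpq⟩ := pend_of_dF_two hiso h4 u hu2
        have hpx : p = x := huniq p q hpq
        have hqy : q = y := (hpq y (hpx ▸ hHxy)).symm
        exact hyu (hqy ▸ huq).symm
      have hdx := hpendbound x y hxy
      have hymem : y ∈ Finset.univ.erase x := by simp [hyx]
      set s0 := (Finset.univ.erase x).erase y with hs0
      have e1 : d x + ∑ v ∈ Finset.univ.erase x, d v = ∑ v, d v :=
        Finset.add_sum_erase _ d (Finset.mem_univ x)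
      have e2 : d y + ∑ v ∈ s0, d v = ∑ v ∈ Finset.univ.erase x, d v :=
        Finset.add_sum_erase _ d hymem
      have hsplit : ∑ v ∈ s0.filter (fun u => Gf.Adj y u), d v
          + ∑ v ∈ s0.filter (fun u => ¬ Gf.Adj y u), d v = ∑ v ∈ s0, d v :=
        Finset.sum_filter_add_sum_filter_not _ _ _
      have ht1 : (s0.filter (fun u => Gf.Adj y u)).card = d y := by
        have hfe : s0.filter (fun u => Gf.Adj y u) = Gf.neighborFinset y := by
          ext w
          simp only [Finset.mem_filter, hs0, Finset.mem_erase, Finset.mem_univ, and_true,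
            SimpleGraph.mem_neighborFinset]
          constructor
          · tauto
          · intro hadj
            refine ⟨⟨hadj.ne', fun hwx => ?_⟩, hadj⟩
            exact hnGxy (hwx ▸ hadj).symm
        rw [hfe]
        rfl
      have ht2 : (s0.filter (fun u => Gf.Adj y u)).card * 2
          ≤ ∑ v ∈ s0.filter (fun u => Gf.Adj y u), d v := by
        rw [← smul_eq_mul]
        exact Finset.card_nsmul_le_sum _ _ _ (fun v _ => hd2 v)
      have ht3 : (s0.filter (fun u => ¬ Gf.Adj y u)).card * 3
          ≤ ∑ v ∈ s0.filter (fun u => ¬ Gf.Adj y u), d v := by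
        rw [← smul_eq_mul]
        refine Finset.card_nsmul_le_sum _ _ _ (fun v hv => ?_)
        rw [Finset.mem_filter, hs0, Finset.mem_erase, Finset.mem_erase] at hv
        exact claim2 v hv.1.2.1 hv.2
      have hcards : (s0.filter (fun u => Gf.Adj y u)).card
          + (s0.filter (fun u => ¬ Gf.Adj y u)).card = s0.card :=
        Finset.card_filter_add_card_filter_not _
      have hs0card : s0.card = n - 2 := by
        rw [hs0, Finset.card_erase_of_mem hymem, Finset.card_erase_of_mem (Finset.mem_univ _)]
        simp only [Finset.card_univ, Fintype.card_fin]
        omega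
      omega
    · -- no pendant vertex
      push_neg at hp1
      have hd3 : ∀ v, 3 ≤ d v := by
        intro v
        by_contra h3
        have hv2 : d v = 2 := by have := hd2 v; omega
        obtain ⟨p, q, -, -, hpq⟩ := pend_of_dF_two hiso h4 v hv2
        obtain ⟨b, hb, hbq⟩ := hp1 p q
        exact hbq (hpq b hb)
      by_cases hall4 : ∀ v, 4 ≤ d v
      · have h : (Finset.univ : Finset (Fin n)).card * 4 ≤ ∑ v, d v := by
          rw [← smul_eq_mul]
          exact Finset.card_nsmul_le_sum Finset.univ d 4 (fun x _ => hall4 x)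
        simp only [Finset.card_univ, Fintype.card_fin] at h
        omega
      · push_neg at hall4
        obtain ⟨u, hu4⟩ := hall4
        have hu3 : d u = 3 := by have := hd3 u; omega
        have hu3' : (Gf.neighborFinset u).card = 3 := hu3
        rw [Finset.card_eq_three] at hu3'
        obtain ⟨x, y, z, hxy, hxz, hyz, hset⟩ := hu3'
        have hmem : ∀ w, Gf.Adj u w ↔ (w = x ∨ w = y ∨ w = z) := by
          intro w
          rw [← SimpleGraph.mem_neighborFinset, hset]
          simp
        have hux : Gf.Adj u x := (hmem x).mpr (Or.inl rfl)
        have huy : Gf.Adj u y := (hmem y).mpr (Or.inr (Or.inl rfl))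
        have huz : Gf.Adj u z := (hmem z).mpr (Or.inr (Or.inr rfl))
        -- n ≥ 6
        obtain ⟨w₁, hw₁⟩ := hiso u
        obtain ⟨w₂, hw₂, hw21⟩ := hp1 u w₁
        have hwprop : ∀ w, H.Adj u w → w ≠ u ∧ w ≠ x ∧ w ≠ y ∧ w ≠ z := by
          intro w hw
          have h1 : u ≠ w := ((adj_iff F u w).mp hw).1
          have h2 : ¬ Gf.Adj u w := ((adj_iff F u w).mp hw).2
          refine ⟨Ne.symm h1, fun h => h2 ((hmem w).mpr (Or.inl h)),
            fun h => h2 ((hmem w).mpr (Or.inr (Or.inl h))),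
            fun h => h2 ((hmem w).mpr (Or.inr (Or.inr h)))⟩
        obtain ⟨hw1u, hw1x, hw1y, hw1z⟩ := hwprop w₁ hw₁
        obtain ⟨hw2u, hw2x, hw2y, hw2z⟩ := hwprop w₂ hw₂
        have hn6 : 6 ≤ n := by
          have hcard6 : ({u, x, y, z, w₁, w₂} : Finset (Fin n)).card = 6 := by
            rw [Finset.card_insert_of_notMem (by
              simp only [Finset.mem_insert, Finset.mem_singleton]
              push_neg
              exact ⟨Ne.symm hux.ne', Ne.symm huy.ne', Ne.symm huz.ne',
                Ne.symm hw1u, Ne.symm hw2u⟩)]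
            rw [Finset.card_insert_of_notMem (by
              simp only [Finset.mem_insert, Finset.mem_singleton]
              push_neg
              exact ⟨hxy, hxz, Ne.symm hw1x, Ne.symm hw2x⟩)]
            rw [Finset.card_insert_of_notMem (by
              simp only [Finset.mem_insert, Finset.mem_singleton]
              push_neg
              exact ⟨hyz, Ne.symm hw1y, Ne.symm hw2y⟩)]
            rw [Finset.card_insert_of_notMem (by
              simp only [Finset.mem_insert, Finset.mem_singleton]
              push_neg
              exact ⟨Ne.symm hw1z, Ne.symm hw2z⟩)]
            rw [Finset.card_insert_of_notMem (by simpa using (Ne.symm hw21 : w₁ ≠ w₂))]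
            simp
          have := Finset.card_le_univ ({u, x, y, z, w₁, w₂} : Finset (Fin n))
          rw [hcard6] at this
          simpa using this
        -- sum decomposition
        have hxmem : x ∈ Finset.univ.erase u := by simp [hux.ne']
        have hymem : y ∈ (Finset.univ.erase u).erase x := by
          simp [huy.ne', Ne.symm hxy]
        have hzmem : z ∈ ((Finset.univ.erase u).erase x).erase y := by
          simp [huz.ne', Ne.symm hxz, Ne.symm hyz]
        set out := (((Finset.univ.erase u).erase x).erase y).erase z with hout
        have e1 : d u + ∑ v ∈ Finset.univ.erase u, d v = ∑ v, d v :=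
          Finset.add_sum_erase _ d (Finset.mem_univ u)
        have e2 : d x + ∑ v ∈ (Finset.univ.erase u).erase x, d v
            = ∑ v ∈ Finset.univ.erase u, d v := Finset.add_sum_erase _ d hxmem
        have e3 : d y + ∑ v ∈ ((Finset.univ.erase u).erase x).erase y, d v
            = ∑ v ∈ (Finset.univ.erase u).erase x, d v := Finset.add_sum_erase _ d hymem
        have e4 : d z + ∑ v ∈ out, d v
            = ∑ v ∈ ((Finset.univ.erase u).erase x).erase y, d v :=
          Finset.add_sum_erase _ d hzmem
        have houtmem : ∀ b ∈ out, b ≠ u ∧ b ≠ x ∧ b ≠ y ∧ b ≠ z := by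
          intro b hb
          rw [hout, Finset.mem_erase, Finset.mem_erase, Finset.mem_erase,
            Finset.mem_erase] at hb
          tauto
        have hkey : ∀ b ∈ out, 2 ≤ (if Gf.Adj b x then 1 else 0)
            + (if Gf.Adj b y then 1 else 0) + (if Gf.Adj b z then 1 else 0) := by
          intro b hb
          obtain ⟨hbu, hbx, hby, hbz⟩ := houtmem b hb
          rcases key3 hiso h4 u x y z hux huy huz (fun w hw => (hmem w).mp hw) b hbx hby hbz
            with ⟨ha, hb'⟩ | ⟨ha, hb'⟩ | ⟨ha, hb'⟩ <;> rw [← hGf] at ha hb' <;> simp [ha, hb']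
        have hsumout : out.card * 2 ≤ ∑ b ∈ out, ((if Gf.Adj b x then 1 else 0)
            + (if Gf.Adj b y then 1 else 0) + (if Gf.Adj b z then 1 else 0)) := by
          rw [← smul_eq_mul]
          exact Finset.card_nsmul_le_sum out _ 2 hkey
        have hsum_eq : ∑ b ∈ out, ((if Gf.Adj b x then 1 else 0)
            + (if Gf.Adj b y then 1 else 0) + (if Gf.Adj b z then 1 else 0))
            = (out.filter (fun b => Gf.Adj b x)).card
              + (out.filter (fun b => Gf.Adj b y)).card
              + (out.filter (fun b => Gf.Adj b z)).card := by
          rw [Finset.sum_add_distrib, Finset.sum_add_distrib,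
            Finset.card_filter, Finset.card_filter, Finset.card_filter]
        have hins : ∀ t : Fin n, Gf.Adj u t →
            (out.filter (fun b => Gf.Adj b t)).card + 1 ≤ d t := by
          intro t ht
          have hu_not : u ∉ out.filter (fun b => Gf.Adj b t) := by
            intro h
            exact ((houtmem u (Finset.mem_filter.mp h).1).1) rfl
          have hsub : insert u (out.filter (fun b => Gf.Adj b t)) ⊆ Gf.neighborFinset t := by
            intro w hw
            rw [Finset.mem_insert] at hw
            rw [SimpleGraph.mem_neighborFinset]
            rcases hw with rfl | hw
            · exact ht.symm
            · exact (Finset.mem_filter.mp hw).2.symm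
          have hcardins := Finset.card_le_card hsub
          rw [Finset.card_insert_of_notMem hu_not] at hcardins
          exact hcardins
        have hix := hins x hux
        have hiy := hins y huy
        have hiz := hins z huz
        have hrest : out.card * 3 ≤ ∑ v ∈ out, d v := by
          rw [← smul_eq_mul]
          exact Finset.card_nsmul_le_sum out d 3 (fun v _ => hd3 v)
        have hcardout : out.card = n - 4 := by
          rw [hout, Finset.card_erase_of_mem hzmem, Finset.card_erase_of_mem hymem,
            Finset.card_erase_of_mem hxmem, Finset.card_erase_of_mem (Finset.mem_univ _)]
          simp only [Finset.card_univ, Fintype.card_fin]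
          omega
        omega

private lemma lower_bound (hn : 4 ≤ n) (hF : F ⊆ (⊤ : SimpleGraph (Fin n)).edgeSet)
    (hiso : NoIsolatedVerts ((⊤ : SimpleGraph (Fin n)).deleteEdges F))
    (h4 : ∀ S : Set (Fin n),
      IsTotalDominatingSet ((⊤ : SimpleGraph (Fin n)).deleteEdges F) S → 4 ≤ S.ncard) :
    2 * n - 4 ≤ F.ncard := by
  have h1 := sum_bound hn hiso h4
  have h2 := handshake hF
  omega

private lemma tdn_le_ncard {V : Type*} (G : SimpleGraph V) (S : Set V)
    (hS : IsTotalDominatingSet G S) : totalDominationNumber G ≤ S.ncard :=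
  Nat.sInf_le ⟨S, rfl, hS⟩

private lemma le_tdn {V : Type*} (G : SimpleGraph V) (k : ℕ) (S₀ : Set V)
    (hS₀ : IsTotalDominatingSet G S₀)
    (h : ∀ S, IsTotalDominatingSet G S → k ≤ S.ncard) : k ≤ totalDominationNumber G := by
  refine le_csInf ⟨S₀.ncard, S₀, rfl, hS₀⟩ ?_
  rintro m ⟨S, rfl, hS⟩
  exact h S hS

private lemma fin_mk_ne {i j : ℕ} (hi : i < n) (hj : j < n) (hij : i ≠ j) :
    (⟨i, hi⟩ : Fin n) ≠ ⟨j, hj⟩ := by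
  intro h
  exact hij (by injection h)

private lemma gamma_top (hn : 4 ≤ n) :
    totalDominationNumber (⊤ : SimpleGraph (Fin n)) = 2 := by
  have v0 : Fin n := ⟨0, by omega⟩
  set w0 : Fin n := ⟨0, by omega⟩ with hw0
  set w1 : Fin n := ⟨1, by omega⟩ with hw1
  have h01 : w0 ≠ w1 := fin_mk_ne _ _ (by omega)
  have hTDS : IsTotalDominatingSet (⊤ : SimpleGraph (Fin n)) ({w0, w1} : Set (Fin n)) := by
    intro v
    by_cases hv : v = w0
    · exact ⟨w1, by simp, by simp [hv, h01]⟩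
    · exact ⟨w0, by simp, by simp [hv]⟩
  apply le_antisymm
  · have h := tdn_le_ncard _ _ hTDS
    rwa [Set.ncard_pair h01] at h
  · refine le_tdn _ 2 _ hTDS ?_
    intro S hS
    obtain ⟨u, huS, hu⟩ := hS w0
    obtain ⟨w, hwS, hw⟩ := hS u
    have huw : u ≠ w := (SimpleGraph.top_adj u w).mp hw
    have hsub : ({u, w} : Set (Fin n)) ⊆ S := by
      intro t ht
      rcases ht with rfl | ht
      · exact huS
      · rw [Set.mem_singleton_iff] at ht
        exact ht ▸ hwS
    have h2 := Set.ncard_le_ncard hsub S.toFinite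
    rwa [Set.ncard_pair huw] at h2

set_option maxHeartbeats 1000000 in
private lemma upper_construction (hn : 4 ≤ n) :
    ∃ F : Set (Sym2 (Fin n)), F ⊆ (⊤ : SimpleGraph (Fin n)).edgeSet ∧
      F.ncard = 2 * n - 4 ∧
      NoIsolatedVerts ((⊤ : SimpleGraph (Fin n)).deleteEdges F) ∧
      (∀ S : Set (Fin n),
        IsTotalDominatingSet ((⊤ : SimpleGraph (Fin n)).deleteEdges F) S → 4 ≤ S.ncard) := by
  classical
  set v0 : Fin n := ⟨0, by omega⟩ with hv0
  set v1 : Fin n := ⟨1, by omega⟩ with hv1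
  set v2 : Fin n := ⟨2, by omega⟩ with hv2
  set v3 : Fin n := ⟨3, by omega⟩ with hv3
  have h01 : v0 ≠ v1 := fin_mk_ne _ _ (by omega)
  have h02 : v0 ≠ v2 := fin_mk_ne _ _ (by omega)
  have h03 : v0 ≠ v3 := fin_mk_ne _ _ (by omega)
  have h12 : v1 ≠ v2 := fin_mk_ne _ _ (by omega)
  have h13 : v1 ≠ v3 := fin_mk_ne _ _ (by omega)
  have h23 : v2 ≠ v3 := fin_mk_ne _ _ (by omega)
  set K : Finset (Fin n) := (Finset.univ.erase v0).erase v1 with hK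
  have hKmem : ∀ k : Fin n, k ∈ K ↔ (k ≠ v1 ∧ k ≠ v0) := by
    intro k
    rw [hK, Finset.mem_erase, Finset.mem_erase]
    simp
  set A : Finset (Sym2 (Fin n)) :=
    K.image (fun k => s(v0, k)) ∪ K.image (fun k => s(v1, k)) with hA
  have fgen : ∀ e ∈ A, ∃ k : Fin n, k ≠ v0 ∧ k ≠ v1 ∧ (e = s(v0, k) ∨ e = s(v1, k)) := by
    intro e he
    rw [hA, Finset.mem_union, Finset.mem_image, Finset.mem_image] at he
    rcases he with ⟨k, hk, hke⟩ | ⟨k, hk, hke⟩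
    · exact ⟨k, ((hKmem k).mp hk).2, ((hKmem k).mp hk).1, Or.inl hke.symm⟩
    · exact ⟨k, ((hKmem k).mp hk).2, ((hKmem k).mp hk).1, Or.inr hke.symm⟩
  have f2 : ∀ b : Fin n, b ≠ v0 → b ≠ v1 → s(v0, b) ∈ A ∧ s(v1, b) ∈ A := by
    intro b hb0 hb1
    have hbK : b ∈ K := (hKmem b).mpr ⟨hb1, hb0⟩
    constructor
    · exact Finset.mem_union_left _ (Finset.mem_image.mpr ⟨b, hbK, rfl⟩)
    · exact Finset.mem_union_right _ (Finset.mem_image.mpr ⟨b, hbK, rfl⟩)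
  have f1 : s(v0, v1) ∉ A := by
    intro h
    obtain ⟨k, hk0, hk1, hor⟩ := fgen _ h
    rcases hor with h' | h'
    · rcases Sym2.eq_iff.mp h' with ⟨-, h''⟩ | ⟨-, h''⟩
      · exact hk1 h''.symm
      · exact h01 h''.symm
    · rcases Sym2.eq_iff.mp h' with ⟨h'', -⟩ | ⟨h'', -⟩
      · exact h01 h''
      · exact hk0 h''.symm
  have f3 : ∀ a b : Fin n, a ≠ v0 → a ≠ v1 → b ≠ v0 → b ≠ v1 → s(a, b) ∉ A := by
    intro a b ha0 ha1 hb0 hb1 h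
    obtain ⟨k, hk0, hk1, hor⟩ := fgen _ h
    rcases hor with h' | h'
    · rcases Sym2.eq_iff.mp h' with ⟨h'', -⟩ | ⟨-, h''⟩
      · exact ha0 h''
      · exact hb0 h''
    · rcases Sym2.eq_iff.mp h' with ⟨h'', -⟩ | ⟨-, h''⟩
      · exact ha1 h''
      · exact hb1 h''
  have hadj : ∀ a b : Fin n,
      ((⊤ : SimpleGraph (Fin n)).deleteEdges (↑A : Set (Sym2 (Fin n)))).Adj a b ↔
        a ≠ b ∧ s(a, b) ∉ A := by
    intro a b
    rw [SimpleGraph.deleteEdges_adj, SimpleGraph.top_adj, Finset.mem_coe]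
  refine ⟨(↑A : Set (Sym2 (Fin n))), ?_, ?_, ?_, ?_⟩
  · -- subset of edges
    intro e he
    rw [Finset.mem_coe] at he
    obtain ⟨k, hk0, hk1, hor⟩ := fgen _ he
    rw [SimpleGraph.edgeSet_top, Set.mem_compl_iff, Sym2.mem_diagSet]
    rcases hor with h' | h' <;> rw [h'] <;> simp [Sym2.isDiag_iff_proj_eq]
    · exact fun h => hk0 h.symm
    · exact fun h => hk1 h.symm
  · -- cardinality
    rw [Set.ncard_coe_finset, hA]
    have hinj0 : Function.Injective (fun k : Fin n => s(v0, k)) :=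
      fun a b h => Sym2.congr_right.mp h
    have hinj1 : Function.Injective (fun k : Fin n => s(v1, k)) :=
      fun a b h => Sym2.congr_right.mp h
    have hdisj : Disjoint (K.image (fun k => s(v0, k))) (K.image (fun k => s(v1, k))) := by
      rw [Finset.disjoint_left]
      intro e he0 he1
      rw [Finset.mem_image] at he0 he1
      obtain ⟨k, hk, hke⟩ := he0
      obtain ⟨k', hk', hke'⟩ := he1
      rw [← hke'] at hke
      rcases Sym2.eq_iff.mp hke with ⟨h', -⟩ | ⟨-, h'⟩
      · exact h01 h'
      · exact ((hKmem k).mp hk).1 h'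
    rw [Finset.card_union_of_disjoint hdisj, Finset.card_image_of_injective _ hinj0,
      Finset.card_image_of_injective _ hinj1]
    have hKcard : K.card = n - 2 := by
      rw [hK, Finset.card_erase_of_mem (by simp [Ne.symm h01]),
        Finset.card_erase_of_mem (Finset.mem_univ _)]
      simp only [Finset.card_univ, Fintype.card_fin]
      omega
    omega
  · -- no isolated vertices
    intro v
    by_cases hv0' : v = v0
    · exact ⟨v1, (hadj _ _).mpr ⟨hv0' ▸ h01, hv0' ▸ f1⟩⟩
    · by_cases hv1' : v = v1
      · refine ⟨v0, (hadj _ _).mpr ⟨hv1' ▸ h01.symm, ?_⟩⟩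
        rw [hv1', Sym2.eq_swap]
        exact f1
      · by_cases hv2' : v = v2
        · exact ⟨v3, (hadj _ _).mpr ⟨hv2' ▸ h23, hv2' ▸ f3 v2 v3 h02.symm h12.symm h03.symm h13.symm⟩⟩
        · exact ⟨v2, (hadj _ _).mpr ⟨hv2', f3 v v2 hv0' hv1' h02.symm h12.symm⟩⟩
  · -- total domination number at least 4
    intro S hS
    obtain ⟨u0, hu0S, hu0⟩ := hS v0
    rw [hadj] at hu0
    have hu0v1 : u0 = v1 := by
      by_contra h
      exact hu0.2 (f2 u0 (Ne.symm hu0.1) h).1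
    obtain ⟨u1, hu1S, hu1⟩ := hS v1
    rw [hadj] at hu1
    have hu1v0 : u1 = v0 := by
      by_contra h
      exact hu1.2 (f2 u1 h (Ne.symm hu1.1)).2
    obtain ⟨w, hwS, hw⟩ := hS v2
    rw [hadj] at hw
    have hwv0 : w ≠ v0 := by
      intro h
      apply hw.2
      rw [h, Sym2.eq_swap]
      exact (f2 v2 h02.symm h12.symm).1
    have hwv1 : w ≠ v1 := by
      intro h
      apply hw.2
      rw [h, Sym2.eq_swap]
      exact (f2 v2 h02.symm h12.symm).2
    obtain ⟨w', hw'S, hw'⟩ := hS w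
    rw [hadj] at hw'
    have hw'v0 : w' ≠ v0 := by
      intro h
      apply hw'.2
      rw [h, Sym2.eq_swap]
      exact (f2 w hwv0 hwv1).1
    have hw'v1 : w' ≠ v1 := by
      intro h
      apply hw'.2
      rw [h, Sym2.eq_swap]
      exact (f2 w hwv0 hwv1).2
    have hww' : w ≠ w' := hw'.1
    have hsub : ({v0, v1, w, w'} : Set (Fin n)) ⊆ S := by
      intro t ht
      rcases ht with rfl | rfl | rfl | ht
      · exact hu1v0 ▸ hu1S
      · exact hu0v1 ▸ hu0S
      · exact hwS
      · rw [Set.mem_singleton_iff] at ht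
        exact ht ▸ hw'S
    have hcard4 : ({v0, v1, w, w'} : Set (Fin n)).ncard = 4 := by
      rw [Set.ncard_insert_of_notMem (by
        simp only [Set.mem_insert_iff, Set.mem_singleton_iff]
        push_neg
        exact ⟨h01, Ne.symm hwv0, Ne.symm hw'v0⟩)]
      rw [Set.ncard_insert_of_notMem (by
        simp only [Set.mem_insert_iff, Set.mem_singleton_iff]
        push_neg
        exact ⟨Ne.symm hwv1, Ne.symm hw'v1⟩)]
      rw [Set.ncard_insert_of_notMem (by simpa using hww'), Set.ncard_singleton]
    have h4 := Set.ncard_le_ncard hsub S.toFinite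
    rw [hcard4] at h4
    exact h4

end KTB

/-- For `n ≥ 4`, the `2`-total bondage number of the complete graph `K_n` is
`2n − 4`. -/
theorem kTotalBondage_completeGraph_two (n : ℕ) (hn : 4 ≤ n) :
    kTotalBondage (⊤ : SimpleGraph (Fin n)) 2 = 2 * n - 4 := by
  classical
  have hgtop : totalDominationNumber (⊤ : SimpleGraph (Fin n)) = 2 := KTB.gamma_top hn
  obtain ⟨F, hFsub, hFcard, hFiso, hF4⟩ := KTB.upper_construction hn
  have hunivTDS : IsTotalDominatingSet ((⊤ : SimpleGraph (Fin n)).deleteEdges F) Set.univ :=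
    fun v => by obtain ⟨u, hu⟩ := hFiso v; exact ⟨u, Set.mem_univ u, hu⟩
  have hmem : (2 * n - 4) ∈ {m : ℕ | ∃ F : Set (Sym2 (Fin n)),
      F ⊆ (⊤ : SimpleGraph (Fin n)).edgeSet ∧ F.ncard = m ∧
      NoIsolatedVerts ((⊤ : SimpleGraph (Fin n)).deleteEdges F) ∧
      totalDominationNumber (⊤ : SimpleGraph (Fin n)) + 2 ≤
        totalDominationNumber ((⊤ : SimpleGraph (Fin n)).deleteEdges F)} := by
    refine ⟨F, hFsub, hFcard, hFiso, ?_⟩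
    rw [hgtop]
    exact KTB.le_tdn _ 4 Set.univ hunivTDS hF4
  unfold kTotalBondage
  apply le_antisymm
  · exact Nat.sInf_le hmem
  · refine le_csInf ⟨_, hmem⟩ ?_
    rintro m ⟨F', hsub', hcard', hiso', hg'⟩
    rw [hgtop] at hg'
    have h4' : ∀ S : Set (Fin n),
        IsTotalDominatingSet ((⊤ : SimpleGraph (Fin n)).deleteEdges F') S → 4 ≤ S.ncard := by
      intro S hS
      have := KTB.tdn_le_ncard _ _ hS
      omega
    have := KTB.lower_bound hn hsub' hiso' h4'
    omega
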